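/- For every summable ideal I_{c_n} (where (c_n) is a sequence of positive reals with ∑_{n∈ω} c_n = ∞) and every A ∈ (I_{c_n})⁺, the ideal I_b is not below I_{c_n}↾A in the Rudin–Keisler order: I_b ≰_RK I_{c_n}↾A. -/

import Mathlib

open MeasureTheory Set

/-- An ideal on a (countable) set `X`. -/
def IsIdeal {X : Type} (I : Set (Set X)) : Prop :=
  (∀ A B : Set X, A ∈ I → B ∈ I → A ∪ B ∈ I) ∧
  (∀ A B : Set X, A ⊆ B → B ∈ I → A ∈ I) ∧
  (∀ A : Set X, A.Finite → A ∈ I) ∧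
  (Set.univ : Set X) ∉ I

/-- `I`-pointwise convergence on `[0,1]` of a family of functions. -/
def IConvPtwise {X : Type} (I : Set (Set X)) (f : X → ℝ → ℝ) (g : ℝ → ℝ) : Prop :=
  ∀ t ∈ Icc (0:ℝ) 1, ∀ ε : ℝ, 0 < ε → {a : X | ε ≤ |f a t - g t|} ∈ I

/-- `I`-uniform convergence on `M` of a family of functions. -/
def IConvUnif {X : Type} (I : Set (Set X)) (f : X → ℝ → ℝ) (g : ℝ → ℝ) (M : Set ℝ) : Prop :=
  ∀ ε : ℝ, 0 < ε → {a : X | ∃ t ∈ M, ε ≤ |f a t - g t|} ∈ I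

/-- `I` is an Egorov ideal. -/
def IsEgorov {X : Type} (I : Set (Set X)) : Prop :=
  ∀ (f : X → ℝ → ℝ) (g : ℝ → ℝ),
    (∀ a : X, AEMeasurable (f a) (volume.restrict (Icc (0:ℝ) 1))) →
    AEMeasurable g (volume.restrict (Icc (0:ℝ) 1)) →
    IConvPtwise I f g →
    ∀ η : ℝ, 0 < η →
      ∃ M : Set ℝ, M ⊆ Icc (0:ℝ) 1 ∧ NullMeasurableSet M volume ∧
        volume (Icc (0:ℝ) 1 \ M) < ENNReal.ofReal η ∧
        IConvUnif I f g M

def IsSubmeasure (φ : Set ℕ → ENNReal) : Prop :=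
  φ ∅ = 0 ∧ (∀ n : ℕ, φ {n} < ⊤) ∧
  ∀ A B : Set ℕ, φ A ≤ φ (A ∪ B) ∧ φ (A ∪ B) ≤ φ A + φ B

def IsLscSubmeasure (φ : Set ℕ → ENNReal) : Prop :=
  ∀ A : Set ℕ, φ A = ⨆ n : ℕ, φ (A ∩ Iio n)

def IsNonpathological (φ : Set ℕ → ENNReal) : Prop :=
  ∀ A : Set ℕ, φ A = ⨆ (μ : Measure ℕ) (_ : ∀ B : Set ℕ, μ B ≤ φ B), μ A

/-- `I` is a non-pathological Σ⁰₂ ideal: `I = Fin(φ)` for some non-pathological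
lsc submeasure `φ` with `φ(ω) = ∞`. -/
def IsNonpathSigma2 (I : Set (Set ℕ)) : Prop :=
  ∃ φ : Set ℕ → ENNReal, IsSubmeasure φ ∧ IsLscSubmeasure φ ∧ IsNonpathological φ ∧
    φ Set.univ = ⊤ ∧ I = {A : Set ℕ | φ A < ⊤}

def IdealCountablyGenerated {X : Type} (I : Set (Set X)) : Prop :=
  ∃ B : Set (Set X), B.Countable ∧ B ⊆ I ∧
    ∀ A ∈ I, ∃ F : Set (Set X), F ⊆ B ∧ F.Finite ∧ A ⊆ ⋃₀ F

def IdealIso {X Y : Type} (I : Set (Set X)) (J : Set (Set Y)) : Prop :=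
  ∃ f : Y → X, Function.Bijective f ∧ ∀ A : Set X, (A ∈ I ↔ f ⁻¹' A ∈ J)

def RKle {X Y : Type} (I : Set (Set X)) (J : Set (Set Y)) : Prop :=
  ∃ f : Y → X, ∀ A : Set X, (A ∈ I ↔ f ⁻¹' A ∈ J)

def RBle {X Y : Type} (I : Set (Set X)) (J : Set (Set Y)) : Prop :=
  ∃ f : Y → X, (∀ x : X, (f ⁻¹' {x}).Finite) ∧ ∀ A : Set X, (A ∈ I ↔ f ⁻¹' A ∈ J)

/-- The restriction `I↾A` of an ideal, as an ideal on the subtype `↥A`. -/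
def restrictIdeal {X : Type} (I : Set (Set X)) (A : Set X) : Set (Set ↥A) :=
  {S : Set ↥A | (Subtype.val '' S) ∈ I}

def IsTall {X : Type} (I : Set (Set X)) : Prop :=
  ∀ A : Set X, A.Infinite → ∃ B ∈ I, B.Infinite ∧ B ⊆ A
/-- The branch `A_x = {x↾n : n ∈ ω} ⊆ 2^{<ω}` of `x ∈ 2^ω`. -/
def branchSet (x : ℕ → Bool) : Set (List Bool) :=
  {s : List Bool | ∃ n : ℕ, s = (List.range n).map x}

/-- The ideal `I_b` on `2^{<ω}`, generated by the branches `A_x` for `x ∈ 2^ω`. -/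
def IbIdeal : Set (Set (List Bool)) :=
  {B | ∃ F : Set (ℕ → Bool), F.Finite ∧ B ⊆ ⋃ x ∈ F, branchSet x}


/-- The summable ideal `I_c = {A ⊆ ω : ∑_{n∈A} c_n < ∞}`. -/
def summableIdeal (c : ℕ → ℝ) : Set (Set ℕ) := {A : Set ℕ | Summable (A.indicator c)}


open scoped ENNReal

private lemma sumIdeal_aux_indicator (c : ℕ → ℝ) (hc : ∀ n, 0 ≤ c n) (S : Set ℕ) :
    Summable (S.indicator c) ↔ ∑' n, S.indicator (fun n => ENNReal.ofReal (c n)) n ≠ ⊤ := by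
  have h1 : ∀ n, S.indicator (fun n => ENNReal.ofReal (c n)) n = ENNReal.ofReal (S.indicator c n) := by
    intro n; by_cases h : n ∈ S <;> simp [h]
  constructor
  · intro h
    have h2 : ∑' n, S.indicator (fun n => ENNReal.ofReal (c n)) n
        = ENNReal.ofReal (∑' n, S.indicator c n) := by
      rw [ENNReal.ofReal_tsum_of_nonneg (fun n => Set.indicator_nonneg (fun n _ => hc n) n) h]
      exact tsum_congr h1
    rw [h2]; exact ENNReal.ofReal_ne_top
  · intro h
    have h3 := ENNReal.summable_toReal h
    refine h3.congr fun n => ?_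
    rw [h1 n, ENNReal.toReal_ofReal (Set.indicator_nonneg (fun n _ => hc n) n)]

private lemma map_range_pointwise {x y : ℕ → Bool} {m : ℕ}
    (h : (List.range m).map x = (List.range m).map y) {i : ℕ} (hi : i < m) : x i = y i := by
  have h1 : ((List.range m).map x)[i]'(by simpa using hi)
      = ((List.range m).map y)[i]'(by simpa using hi) := by simp_rw [h]
  simpa using h1

/-- For every summable ideal `I_c` and every `A ∈ (I_c)⁺`, `I_b ≰_RK I_c↾A`. -/
theorem ib_not_RK_le_summable_restrict (c : ℕ → ℝ) (hpos : ∀ n : ℕ, 0 < c n)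
    (hdiv : ¬ Summable c) (A : Set ℕ) (hA : A ∉ summableIdeal c) :
    ¬ RKle IbIdeal (restrictIdeal (summableIdeal c) A) := by
  rintro ⟨f, hf⟩
  set d : ↥A → ℝ≥0∞ := fun a => ENNReal.ofReal (c a.1) with hd
  -- translation of restricted-ideal membership into an `ℝ≥0∞` tsum condition
  have key : ∀ S : Set ↥A,
      S ∈ restrictIdeal (summableIdeal c) A ↔ (∑' a : ↥A, S.indicator d a ≠ ⊤) := by
    intro S
    have himg : ∑' n : ℕ, (Subtype.val '' S).indicator (fun n => ENNReal.ofReal (c n)) n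
        = ∑' a : ↥A, S.indicator d a := by
      calc ∑' n : ℕ, (Subtype.val '' S).indicator (fun n => ENNReal.ofReal (c n)) n
          = ∑' (x : ↥(Subtype.val '' S)), ENNReal.ofReal (c x.1) :=
            (tsum_subtype _ _).symm
        _ = ∑' (x : ↥S), ENNReal.ofReal (c x.1.1) :=
            tsum_image (fun n => ENNReal.ofReal (c n)) Subtype.val_injective.injOn
        _ = ∑' a : ↥A, S.indicator d a := tsum_subtype S d
    have hiff := sumIdeal_aux_indicator c (fun n => (hpos n).le) (Subtype.val '' S)
    constructor
    · intro hS
      rw [← himg]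
      exact hiff.mp hS
    · intro hS
      exact hiff.mpr (himg ▸ hS)
  -- the weight of a node
  set w : List Bool → ℝ≥0∞ := fun s => ∑' a : ↥A, if f a = s then d a else 0 with hw
  -- every branch has finite total weight
  have hbranch : ∀ x : ℕ → Bool, ∑' m : ℕ, w ((List.range m).map x) ≠ ⊤ := by
    intro x
    have hbr : branchSet x ∈ IbIdeal := ⟨{x}, Set.finite_singleton x, by simp⟩
    have hsum_x : ∑' a : ↥A, (f ⁻¹' branchSet x).indicator d a ≠ ⊤ :=
      (key _).mp ((hf _).mp hbr)
    refine ne_top_of_le_ne_top hsum_x ?_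
    have hswap : ∑' m : ℕ, w ((List.range m).map x)
        = ∑' a : ↥A, ∑' m : ℕ, (if f a = (List.range m).map x then d a else 0) := by
      rw [hw]; exact ENNReal.tsum_comm
    rw [hswap]
    refine ENNReal.tsum_le_tsum fun a => ?_
    by_cases ha : f a ∈ branchSet x
    · obtain ⟨m₀, hm₀⟩ := ha
      have heq : ∑' m : ℕ, (if f a = (List.range m).map x then d a else 0)
          = (if f a = (List.range m₀).map x then d a else 0) := by
        refine tsum_eq_single m₀ fun m hm => ?_
        by_cases h2 : f a = (List.range m).map x
        · exfalso
          apply hm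
          have := congrArg List.length (h2.symm.trans hm₀)
          simpa using this
        · simp [h2]
      rw [heq, if_pos hm₀, Set.indicator_of_mem (by exact ⟨m₀, hm₀⟩) d]
    · have heq : ∑' m : ℕ, (if f a = (List.range m).map x then d a else 0) = 0 := by
        refine ENNReal.tsum_eq_zero.mpr fun m => ?_
        have : ¬ f a = (List.range m).map x := fun h => ha ⟨m, h⟩
        simp [this]
      rw [heq]
      exact zero_le
  -- the side branches
  set xb : ℕ → ℕ → Bool := fun n i => decide (i = n) with hxb
  have hex : ∀ n : ℕ, ∃ m : ℕ, n + 1 ≤ m ∧ w ((List.range m).map (xb n)) < 2⁻¹ ^ n := by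
    intro n
    have htend := ENNReal.tendsto_atTop_zero_of_tsum_ne_top (hbranch (xb n))
    have hpos2 : (0 : ℝ≥0∞) < 2⁻¹ ^ n := by
      refine ENNReal.pow_pos ?_ n
      simp [ENNReal.inv_pos]
    have hev := (htend.eventually_lt_const hpos2).and (Filter.eventually_ge_atTop (n + 1))
    obtain ⟨m, hm1, hm2⟩ := hev.exists
    exact ⟨m, hm2, hm1⟩
  choose m hm1 hm2 using hex
  set t : ℕ → List Bool := fun n => (List.range (m n)).map (xb n) with ht
  set B : Set (List Bool) := Set.range t with hB
  -- the preimage of B has finite weight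
  have hBsum : ∑' a : ↥A, (f ⁻¹' B).indicator d a ≠ ⊤ := by
    have hle : ∑' a : ↥A, (f ⁻¹' B).indicator d a
        ≤ ∑' a : ↥A, ∑' n : ℕ, (if f a = t n then d a else 0) := by
      refine ENNReal.tsum_le_tsum fun a => ?_
      by_cases ha : f a ∈ B
      · obtain ⟨n, hn⟩ := ha
        rw [Set.indicator_of_mem (s := f ⁻¹' B) (by exact ⟨n, hn⟩) d]
        refine le_trans ?_ (ENNReal.le_tsum n)
        rw [if_pos hn.symm]
      · rw [Set.indicator_of_notMem (s := f ⁻¹' B) ha d]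
        exact zero_le
    have hle2 : ∑' a : ↥A, ∑' n : ℕ, (if f a = t n then d a else 0)
        ≤ ∑' n : ℕ, (2 : ℝ≥0∞)⁻¹ ^ n := by
      rw [ENNReal.tsum_comm]
      exact ENNReal.tsum_le_tsum fun n => (hm2 n).le
    have hgeo : ∑' n : ℕ, (2 : ℝ≥0∞)⁻¹ ^ n ≠ ⊤ := by
      rw [ENNReal.tsum_geometric, ENNReal.one_sub_inv_two]
      simp
    exact ne_top_of_le_ne_top hgeo (hle.trans hle2)
  have hBmem : B ∈ IbIdeal := (hf B).mpr ((key _).mpr hBsum)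
  obtain ⟨F, hFfin, hFsub⟩ := hBmem
  have hchoice : ∀ n : ℕ, ∃ x ∈ F, t n ∈ branchSet x := by
    intro n
    have : t n ∈ ⋃ x ∈ F, branchSet x := hFsub ⟨n, rfl⟩
    simpa using this
  choose g hgF hgb using hchoice
  -- for each n, g n agrees with xb n below m n
  have hagree : ∀ n : ℕ, ∀ i < m n, g n i = xb n i := by
    intro n i hi
    obtain ⟨k, hk⟩ := hgb n
    have hlen : k = m n := by
      have := congrArg List.length hk
      simpa [ht] using this.symm
    rw [hlen] at hk
    have : (List.range (m n)).map (xb n) = (List.range (m n)).map (g n) := hk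
    exact (map_range_pointwise this hi).symm
  have hlt : ∀ n n' : ℕ, n < n' → g n = g n' → False := by
    intro n n' hnn' hgg
    have h1 : g n n = xb n n := hagree n n (lt_of_lt_of_le (Nat.lt_succ_self n) (hm1 n))
    have h2 : g n' n = xb n' n :=
      hagree n' n (lt_of_lt_of_le (Nat.lt_succ_of_lt hnn') (hm1 n'))
    rw [hgg] at h1
    rw [h1] at h2
    simp only [hxb] at h2
    rw [decide_eq_decide] at h2
    exact (Nat.ne_of_lt hnn') (h2.mp trivial)
  have hginj : Function.Injective g := by
    intro n n' h
    rcases lt_trichotomy n n' with h1 | h1 | h1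
    · exact absurd h (fun hh => hlt n n' h1 hh)
    · exact h1
    · exact absurd h (fun hh => hlt n' n h1 hh.symm)
  have hrange : (Set.range g).Finite := hFfin.subset (Set.range_subset_iff.mpr hgF)
  exact (Set.infinite_range_of_injective hginj) hrange
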